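/- Let P be a submonoid of a (discrete) group G. Suppose that for every finite family a_1, …, a_m of neutral words over P and all scalars λ_1, …, λ_m ∈ ℂ one has ‖Σ_{i=1}^m λ_i L̇_{a_i}‖_{B(ℓ²(P))} = ‖Σ_{i=1}^m λ_i L̄̇_{a_i}‖_{B(ℋ̄)} (i.e., the canonical map from the unit fiber of C*_s(P) ≅ 𝒯̄(P) onto the unit fiber of 𝒯_λ(P) is injective). Then P satisfies independence: whenever a constructible ideal K(a) equals a finite union K(a_1) ∪ … ∪ K(a_n) of constructible ideals, K(a) = K(a_i) for some i. -/

import Mathlib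

noncomputable section
set_option synthInstance.maxHeartbeats 1000000
set_option maxHeartbeats 1000000
set_option linter.unusedVariables false

open scoped ENNReal

/-- `ℓ²(ι)` with complex coefficients. -/
abbrev l2 (ι : Type*) : Type _ := lp (fun _ : ι => ℂ) 2

/-- The canonical orthonormal basis vector `δ_i` of `ℓ²(ι)`. -/
noncomputable def ket {ι : Type*} (i : ι) : l2 ι :=
  haveI := Classical.decEq ι
  lp.single 2 i 1

variable {G : Type*} [Group G]

/-- A word `a = (p₁, p₂, …, p_{2k-1}, p_{2k})` of even length over `P`, recorded as the list of
its consecutive pairs `(p₁,p₂), (p₃,p₄), …, (p_{2k-1},p_{2k})`. -/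
abbrev Word (P : Submonoid G) := List (P × P)

/-- `ȧ = p₁⁻¹ p₂ ⋯ p_{2k-1}⁻¹ p_{2k} ∈ G`. -/
def wordElem (P : Submonoid G) (w : Word P) : G :=
  (w.map (fun pq => ((pq.1 : G))⁻¹ * (pq.2 : G))).prod

/-- A word is neutral if `ȧ = e`. -/
def IsNeutral (P : Submonoid G) (w : Word P) : Prop := wordElem P w = 1

/-- `V̇_a = V_{p₁}^* V_{p₂} ⋯ V_{p_{2k-1}}^* V_{p_{2k}}`. -/
def dotted {A : Type*} [Monoid A] [Star A] (P : Submonoid G) (V : P → A) (w : Word P) : A :=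
  (w.map (fun pq => star (V pq.1) * V pq.2)).prod

/-- The constructible right ideal `K(a) = {p ∈ P : L̇_a δ_p = δ_p}`, where `L` is the left
regular representation of `P` on `ℓ²(P)`. -/
def KIdeal (P : Submonoid G) (L : P → (l2 P →L[ℂ] l2 P)) (w : Word P) : Set P :=
  {p : P | dotted P L w (ket p) = ket p}

/-- The index set `X = ⨿_{n ≥ 1} Pⁿ` underlying `ℋ̄ = ⊕_{n≥1} ℓ²(P)^{⊗n} ≅ ℓ²(X)`. -/
abbrev PTuples (P : Submonoid G) := Σ n : ℕ, Fin (n + 1) → P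

/-- Coordinatewise left multiplication of a tuple by `p`; `L̄_p δ_x = δ_{p • x}`. -/
def pMul (P : Submonoid G) (p : P) (x : PTuples P) : PTuples P := ⟨x.1, fun i => p * x.2 i⟩

lemma ket_def {ι : Type*} [DecidableEq ι] (i : ι) : (ket i : l2 ι) = lp.single 2 i 1 := by
  unfold ket
  congr!

lemma ket_apply_self {ι : Type*} (i : ι) : (ket i : l2 ι) i = 1 := by
  classical
  rw [ket_def]
  exact lp.single_apply_self _ _ _

lemma ket_apply_ne {ι : Type*} {i j : ι} (h : j ≠ i) : (ket i : l2 ι) j = 0 := by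
  classical
  rw [ket_def]
  exact lp.single_apply_ne _ _ _ h

lemma ket_ne_zero {ι : Type*} (i : ι) : (ket i : l2 ι) ≠ 0 := by
  intro h
  have := congrArg (fun f : l2 ι => (f : ∀ _ : ι, ℂ) i) h
  simp only [ket_apply_self, lp.coeFn_zero, Pi.zero_apply] at this
  exact one_ne_zero this

lemma ket_injective {ι : Type*} : Function.Injective (ket (ι := ι)) := by
  intro i j h
  by_contra hne
  have := congrArg (fun f : l2 ι => (f : ∀ _ : ι, ℂ) i) h
  dsimp only at this
  rw [ket_apply_ne (fun hh : i = j => hne hh)] at this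
  simp only [ket_apply_self] at this
  exact one_ne_zero this

lemma inner_ket_left {ι : Type*} (i : ι) (f : l2 ι) : (inner (𝕜 := ℂ) (ket i) f) = f i := by
  classical
  rw [ket_def, lp.inner_single_left]
  simp

lemma opExt {ι : Type*} {E : Type*} [NormedAddCommGroup E] [NormedSpace ℂ E]
    (A B : l2 ι →L[ℂ] E) (h : ∀ i, A (ket i) = B (ket i)) : A = B := by
  classical
  ext x
  have hs := lp.hasSum_single (E := fun _ : ι => ℂ) (p := 2) (by norm_num) x
  have hA : HasSum (fun i => A (lp.single 2 i (x i))) (A x) := hs.mapL A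
  have hB : HasSum (fun i => B (lp.single 2 i (x i))) (B x) := hs.mapL B
  refine hA.unique ?_
  convert hB using 2 with i
  classical
  have hx : lp.single 2 i (x i) = (x i) • ket i := by
    rw [ket_def, ← lp.single_smul, smul_eq_mul, mul_one]
  rw [hx, map_smul, map_smul, h]

open Classical in
lemma star_shift {ι : Type*} (f : ι → ι) (hf : Function.Injective f)
    (A : l2 ι →L[ℂ] l2 ι) (hA : ∀ i, A (ket i) = ket (f i)) (j : ι) :
    (star A) (ket j) = if h : ∃ i, f i = j then ket h.choose else 0 := by
  apply lp.ext
  funext s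
  have h1 : ((star A) (ket j) : l2 ι) s = (inner (𝕜 := ℂ) (A (ket s)) (ket j)) := by
    rw [← inner_ket_left s ((star A) (ket j)), ContinuousLinearMap.star_eq_adjoint,
      ContinuousLinearMap.adjoint_inner_right]
  rw [h1, hA, inner_ket_left]
  by_cases h : ∃ i, f i = j
  · rw [dif_pos h]
    rcases eq_or_ne (f s) j with he | he
    · have hs : s = h.choose := hf (he.trans h.choose_spec.symm)
      rw [← hs, ket_apply_self, he, ket_apply_self]
    · rw [ket_apply_ne he, ket_apply_ne (fun hh : s = h.choose => he (hh ▸ h.choose_spec))]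
  · have he : f s ≠ j := fun hh => h ⟨s, hh⟩
    rw [dif_neg h, ket_apply_ne he, lp.coeFn_zero, Pi.zero_apply]


def Cond (P : Submonoid G) : Word P → G → Prop
  | [], _ => True
  | pq :: w, g => Cond P w g ∧ ((pq.1 : G))⁻¹ * (pq.2 : G) * wordElem P w * g ∈ P

lemma wordElem_nil (P : Submonoid G) : wordElem P [] = 1 := rfl

lemma wordElem_cons (P : Submonoid G) (pq : P × P) (w : Word P) :
    wordElem P (pq :: w) = ((pq.1 : G))⁻¹ * (pq.2 : G) * wordElem P w := by
  simp [wordElem, mul_assoc]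

lemma wordElem_append (P : Submonoid G) (u v : Word P) :
    wordElem P (u ++ v) = wordElem P u * wordElem P v := by
  simp [wordElem]

lemma memP {P : Submonoid G} : ∀ {w : Word P} {g : G},
    Cond P w g → g ∈ P → wordElem P w * g ∈ P
  | [], g, _, hg => by simpa [wordElem_nil] using hg
  | pq :: w, g, h, hg => by
      rw [wordElem_cons]
      simpa [mul_assoc] using h.2

lemma dotted_nil {A : Type*} [Monoid A] [Star A] (P : Submonoid G) (V : P → A) :
    dotted P V [] = 1 := rfl

lemma dotted_cons {A : Type*} [Monoid A] [Star A] (P : Submonoid G) (V : P → A)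
    (pq : P × P) (w : Word P) :
    dotted P V (pq :: w) = (star (V pq.1) * V pq.2) * dotted P V w := by
  simp [dotted]

lemma dotted_append {A : Type*} [Monoid A] [Star A] (P : Submonoid G) (V : P → A)
    (u v : Word P) : dotted P V (u ++ v) = dotted P V u * dotted P V v := by
  simp [dotted]

open Classical in
lemma star_L (P : Submonoid G) (L : P → (l2 P →L[ℂ] l2 P))
    (hL : ∀ p q : P, L p (ket q) = ket (p * q)) (q r : P) :
    (star (L q)) (ket r) =
      if h : (q : G)⁻¹ * (r : G) ∈ P then ket (⟨(q : G)⁻¹ * r, h⟩ : P) else 0 := by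
  have hf : Function.Injective (fun s : P => q * s) := by
    intro s t hst
    have := congrArg (Subtype.val) hst
    simp only [Submonoid.coe_mul] at this
    exact Subtype.ext (mul_left_cancel this)
  rw [star_shift _ hf (L q) (fun s => hL q s) r]
  by_cases h : (q : G)⁻¹ * (r : G) ∈ P
  · have hex : ∃ s : P, q * s = r :=
      ⟨⟨(q : G)⁻¹ * r, h⟩, Subtype.ext (by simp [mul_inv_cancel_left])⟩
    rw [dif_pos hex, dif_pos h]
    refine congrArg ket (Subtype.ext ?_)
    have hc := congrArg Subtype.val hex.choose_spec
    simp only [Submonoid.coe_mul] at hc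
    exact eq_inv_mul_iff_mul_eq.mpr hc
  · have hex : ¬ ∃ s : P, q * s = r := by
      rintro ⟨s, hs⟩
      apply h
      have hc := congrArg Subtype.val hs
      simp only [Submonoid.coe_mul] at hc
      rw [← hc, inv_mul_cancel_left]
      exact s.2
    rw [dif_neg hex, dif_neg h]

open Classical in
lemma star_Lbar (P : Submonoid G) (Lbar : P → (l2 (PTuples P) →L[ℂ] l2 (PTuples P)))
    (hLbar : ∀ (p : P) (x : PTuples P), Lbar p (ket x) = ket (pMul P p x)) (q : P)
    (x : PTuples P) :
    (star (Lbar q)) (ket x) =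
      if h : ∀ i, (q : G)⁻¹ * (x.2 i : G) ∈ P then
        ket (⟨x.1, fun i => ⟨(q : G)⁻¹ * (x.2 i : G), h i⟩⟩ : PTuples P) else 0 := by
  have hf : Function.Injective (pMul P q) := by
    rintro ⟨n, f⟩ ⟨n', f'⟩ hst
    simp only [pMul] at hst
    rw [Sigma.mk.inj_iff] at hst
    obtain ⟨rfl, hst⟩ := hst
    have hst' : (fun i => q * f i) = fun i => q * f' i := heq_iff_eq.mp hst
    have hff : f = f' := funext fun i => by
      have hc := congrArg Subtype.val (congrFun hst' i)
      simp only [Submonoid.coe_mul] at hc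
      exact Subtype.ext (mul_left_cancel hc)
    rw [hff]
  obtain ⟨n, f⟩ := x
  rw [star_shift _ hf (Lbar q) (fun y => hLbar q y) _]
  by_cases h : ∀ i, (q : G)⁻¹ * ((f i : G)) ∈ P
  · have heq2 : pMul P q ⟨n, fun i => (⟨(q : G)⁻¹ * (f i : G), h i⟩ : P)⟩ = ⟨n, f⟩ := by
      show (⟨n, fun i => q * ⟨(q : G)⁻¹ * (f i : G), h i⟩⟩ : PTuples P) = ⟨n, f⟩
      exact congrArg (Sigma.mk n) (funext fun i => Subtype.ext (by simp))
    have hex : ∃ y, pMul P q y = ⟨n, f⟩ := ⟨_, heq2⟩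
    rw [dif_pos hex, dif_pos h]
    exact congrArg ket (hf (hex.choose_spec.trans heq2.symm))
  · have hex : ¬ ∃ y, pMul P q y = ⟨n, f⟩ := by
      rintro ⟨⟨n', f'⟩, hy⟩
      simp only [pMul] at hy
      rw [Sigma.mk.inj_iff] at hy
      obtain ⟨rfl, hy⟩ := hy
      have hy' : (fun i => q * f' i) = f := heq_iff_eq.mp hy
      apply h
      intro i
      have hc := congrArg Subtype.val (congrFun hy' i)
      simp only [Submonoid.coe_mul] at hc
      rw [← hc, inv_mul_cancel_left]
      exact (f' i).2
    rw [dif_neg hex, dif_neg h]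

open Classical in
lemma dotted_L_apply (P : Submonoid G) (L : P → (l2 P →L[ℂ] l2 P))
    (hL : ∀ p q : P, L p (ket q) = ket (p * q)) :
    ∀ (w : Word P) (p : P), dotted P L w (ket p) =
      if h : Cond P w (p : G) then ket (⟨wordElem P w * p, memP h p.2⟩ : P) else 0
  | [], p => by
      rw [dotted_nil, ContinuousLinearMap.one_apply, dif_pos (show Cond P [] (p : G) from trivial)]
      exact congrArg ket (Subtype.ext (by simp [wordElem_nil]))
  | pq :: w, p => by
      rw [dotted_cons, ContinuousLinearMap.mul_apply, ContinuousLinearMap.mul_apply,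
        dotted_L_apply P L hL w p]
      by_cases hc : Cond P w (p : G)
      · rw [dif_pos hc, hL, star_L P L hL]
        have hcoe : ((pq.1 : G))⁻¹ * ((pq.2 * ⟨wordElem P w * p, memP hc p.2⟩ : P) : G)
            = ((pq.1 : G))⁻¹ * (pq.2 : G) * wordElem P w * (p : G) := by
          simp [mul_assoc]
        by_cases h2 : ((pq.1 : G))⁻¹ * (pq.2 : G) * wordElem P w * (p : G) ∈ P
        · rw [dif_pos (show ((pq.1:G))⁻¹ * ((pq.2 * ⟨wordElem P w * p, memP hc p.2⟩ : P) : G) ∈ P from hcoe ▸ h2),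
            dif_pos (show Cond P (pq :: w) (p : G) from ⟨hc, h2⟩)]
          refine congrArg ket (Subtype.ext ?_)
          simp [wordElem_cons, mul_assoc]
        · rw [dif_neg (show ¬ ((pq.1:G))⁻¹ * ((pq.2 * ⟨wordElem P w * p, memP hc p.2⟩ : P) : G) ∈ P from hcoe ▸ h2),
            dif_neg (show ¬ Cond P (pq :: w) (p : G) from fun hh => h2 hh.2)]
      · rw [dif_neg hc, map_zero, map_zero,
          dif_neg (show ¬ Cond P (pq :: w) (p : G) from fun hh => hc hh.1)]

open Classical in
lemma dotted_Lbar_apply (P : Submonoid G) (Lbar : P → (l2 (PTuples P) →L[ℂ] l2 (PTuples P)))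
    (hLbar : ∀ (p : P) (x : PTuples P), Lbar p (ket x) = ket (pMul P p x)) :
    ∀ (w : Word P) (x : PTuples P), dotted P Lbar w (ket x) =
      if h : ∀ i, Cond P w (x.2 i : G) then
        ket (⟨x.1, fun i => ⟨wordElem P w * (x.2 i : G), memP (h i) (x.2 i).2⟩⟩ : PTuples P)
      else 0
  | [], x => by
      rw [dotted_nil, ContinuousLinearMap.one_apply,
        dif_pos (show ∀ i, Cond P [] ((x.2 i : P) : G) from fun _ => trivial)]
      obtain ⟨n, f⟩ := x
      exact congrArg ket (congrArg (Sigma.mk n) (funext fun i =>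
        Subtype.ext (by simp [wordElem_nil])))
  | pq :: w, x => by
      rw [dotted_cons, ContinuousLinearMap.mul_apply, ContinuousLinearMap.mul_apply,
        dotted_Lbar_apply P Lbar hLbar w x]
      by_cases hc : ∀ i, Cond P w ((x.2 i : P) : G)
      · rw [dif_pos hc, hLbar, star_Lbar P Lbar hLbar]
        set y : PTuples P := pMul P pq.2
          ⟨x.1, fun i => ⟨wordElem P w * (x.2 i : G), memP (hc i) (x.2 i).2⟩⟩ with hy
        have hyi : ∀ i, (y.2 i : G) = (pq.2 : G) * (wordElem P w * (x.2 i : G)) := by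
          intro i; rfl
        have hcond : (∀ i, ((pq.1 : G))⁻¹ * (y.2 i : G) ∈ P) ↔
            (∀ i, ((pq.1 : G))⁻¹ * (pq.2 : G) * wordElem P w * (x.2 i : G) ∈ P) := by
          refine forall_congr' fun i => ?_
          rw [hyi i]
          have hassoc : ((pq.1 : G))⁻¹ * ((pq.2 : G) * (wordElem P w * (x.2 i : G)))
              = ((pq.1 : G))⁻¹ * (pq.2 : G) * wordElem P w * (x.2 i : G) := by
            simp [mul_assoc]
          rw [hassoc]
        by_cases h2 : ∀ i, ((pq.1 : G))⁻¹ * (pq.2 : G) * wordElem P w * (x.2 i : G) ∈ P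
        · rw [dif_pos (hcond.mpr h2), dif_pos (show ∀ i, Cond P (pq :: w) ((x.2 i : P) : G)
            from fun i => ⟨hc i, h2 i⟩)]
          refine congrArg ket ?_
          have hfst : y.1 = x.1 := rfl
          refine congrArg (Sigma.mk x.1) (funext fun i => Subtype.ext ?_)
          show ((pq.1 : G))⁻¹ * (y.2 i : G) = wordElem P (pq :: w) * (x.2 i : G)
          rw [hyi i, wordElem_cons]
          simp [mul_assoc]
        · rw [dif_neg (fun hh => h2 (hcond.mp hh)),
            dif_neg (show ¬ ∀ i, Cond P (pq :: w) ((x.2 i : P) : G) from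
              fun hh => h2 fun i => (hh i).2)]
      · rw [dif_neg hc, map_zero, map_zero,
          dif_neg (show ¬ ∀ i, Cond P (pq :: w) ((x.2 i : P) : G) from
            fun hh => hc fun i => (hh i).1)]

lemma mem_KIdeal_iff (P : Submonoid G) (L : P → (l2 P →L[ℂ] l2 P))
    (hL : ∀ p q : P, L p (ket q) = ket (p * q)) (w : Word P) (p : P) :
    p ∈ KIdeal P L w ↔ (Cond P w (p : G) ∧ IsNeutral P w) := by
  rw [KIdeal, Set.mem_setOf_eq, dotted_L_apply P L hL]
  by_cases h : Cond P w (p : G)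
  · rw [dif_pos h]
    constructor
    · intro he
      have h2 : wordElem P w * (p : G) = (p : G) :=
        congrArg Subtype.val (ket_injective he)
      exact ⟨h, mul_eq_right.mp h2⟩
    · rintro ⟨-, h1⟩
      exact congrArg ket (Subtype.ext (show wordElem P w * (p : G) = p by rw [h1, one_mul]))
  · rw [dif_neg h]
    simp only [h, false_and, iff_false]
    exact fun hh => ket_ne_zero p hh.symm

lemma KIdeal_empty_of_not_neutral (P : Submonoid G) (L : P → (l2 P →L[ℂ] l2 P))
    (hL : ∀ p q : P, L p (ket q) = ket (p * q)) (w : Word P) (hw : ¬ IsNeutral P w) :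
    KIdeal P L w = ∅ := by
  ext p
  simp [mem_KIdeal_iff P L hL, hw]

open Classical in
lemma dotted_L_proj (P : Submonoid G) (L : P → (l2 P →L[ℂ] l2 P))
    (hL : ∀ p q : P, L p (ket q) = ket (p * q)) (w : Word P) (hw : IsNeutral P w) (p : P) :
    dotted P L w (ket p) = if p ∈ KIdeal P L w then ket p else 0 := by
  rw [dotted_L_apply P L hL]
  by_cases h : Cond P w (p : G)
  · rw [dif_pos h, if_pos ((mem_KIdeal_iff P L hL w p).mpr ⟨h, hw⟩)]
    exact congrArg ket (Subtype.ext (show wordElem P w * (p : G) = p by rw [IsNeutral] at hw; rw [hw, one_mul]))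
  · rw [dif_neg h, if_neg (fun hm => h ((mem_KIdeal_iff P L hL w p).mp hm).1)]

open Classical in
lemma dotted_Lbar_proj (P : Submonoid G) (L : P → (l2 P →L[ℂ] l2 P))
    (hL : ∀ p q : P, L p (ket q) = ket (p * q))
    (Lbar : P → (l2 (PTuples P) →L[ℂ] l2 (PTuples P)))
    (hLbar : ∀ (p : P) (x : PTuples P), Lbar p (ket x) = ket (pMul P p x))
    (w : Word P) (hw : IsNeutral P w) (x : PTuples P) :
    dotted P Lbar w (ket x) = if (∀ i, x.2 i ∈ KIdeal P L w) then ket x else 0 := by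
  rw [dotted_Lbar_apply P Lbar hLbar]
  by_cases h : ∀ i, Cond P w ((x.2 i : P) : G)
  · rw [dif_pos h, if_pos (fun i => (mem_KIdeal_iff P L hL w (x.2 i)).mpr ⟨h i, hw⟩)]
    refine congrArg ket ?_
    obtain ⟨n, f⟩ := x
    exact congrArg (Sigma.mk n) (funext fun i => Subtype.ext
      (show wordElem P w * ((f i : P) : G) = f i by rw [IsNeutral] at hw; rw [hw, one_mul]))
  · rw [dif_neg h,
      if_neg (fun hm => h fun i => ((mem_KIdeal_iff P L hL w (x.2 i)).mp (hm i)).1)]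

def catWords (P : Submonoid G) (l : List (Word P)) : Word P := l.foldr (· ++ ·) []

lemma catWords_neutral (P : Submonoid G) :
    ∀ (l : List (Word P)), (∀ w ∈ l, IsNeutral P w) → IsNeutral P (catWords P l)
  | [], _ => rfl
  | w :: l, h => by
      have h1 : catWords P (w :: l) = w ++ catWords P l := rfl
      rw [IsNeutral, h1, wordElem_append, h w (List.mem_cons_self),
        catWords_neutral P l (fun w' hw' => h w' (List.mem_cons_of_mem w hw')), one_mul]

open Classical in
lemma dotted_L_cat (P : Submonoid G) (L : P → (l2 P →L[ℂ] l2 P))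
    (hL : ∀ p q : P, L p (ket q) = ket (p * q)) :
    ∀ (l : List (Word P)), (∀ w ∈ l, IsNeutral P w) → ∀ (p : P),
      dotted P L (catWords P l) (ket p) =
        if (∀ w ∈ l, p ∈ KIdeal P L w) then ket p else 0
  | [], _, p => by
      rw [show catWords P ([] : List (Word P)) = [] from rfl, dotted_nil,
        ContinuousLinearMap.one_apply, if_pos (by simp)]
  | w :: l, h, p => by
      have h1 : catWords P (w :: l) = w ++ catWords P l := rfl
      rw [h1, dotted_append, ContinuousLinearMap.mul_apply,
        dotted_L_cat P L hL l (fun w' hw' => h w' (List.mem_cons_of_mem w hw')) p]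
      by_cases hq : ∀ w' ∈ l, p ∈ KIdeal P L w'
      · rw [if_pos hq, dotted_L_proj P L hL w (h w (List.mem_cons_self)) p]
        by_cases hw : p ∈ KIdeal P L w
        · rw [if_pos hw, if_pos (by
            intro w' hw'
            rcases List.mem_cons.mp hw' with rfl | hw'
            · exact hw
            · exact hq w' hw')]
        · rw [if_neg hw, if_neg (fun hh => hw (hh w (List.mem_cons_self)))]
      · rw [if_neg hq, map_zero, if_neg (fun hh => hq fun w' hw' =>
          hh w' (List.mem_cons_of_mem w hw'))]

open Classical in
lemma dotted_Lbar_cat (P : Submonoid G) (L : P → (l2 P →L[ℂ] l2 P))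
    (hL : ∀ p q : P, L p (ket q) = ket (p * q))
    (Lbar : P → (l2 (PTuples P) →L[ℂ] l2 (PTuples P)))
    (hLbar : ∀ (p : P) (x : PTuples P), Lbar p (ket x) = ket (pMul P p x)) :
    ∀ (l : List (Word P)), (∀ w ∈ l, IsNeutral P w) → ∀ (x : PTuples P),
      dotted P Lbar (catWords P l) (ket x) =
        if (∀ w ∈ l, ∀ i, x.2 i ∈ KIdeal P L w) then ket x else 0
  | [], _, x => by
      rw [show catWords P ([] : List (Word P)) = [] from rfl, dotted_nil,
        ContinuousLinearMap.one_apply, if_pos (by simp)]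
  | w :: l, h, x => by
      have h1 : catWords P (w :: l) = w ++ catWords P l := rfl
      rw [h1, dotted_append, ContinuousLinearMap.mul_apply,
        dotted_Lbar_cat P L hL Lbar hLbar l (fun w' hw' => h w' (List.mem_cons_of_mem w hw')) x]
      by_cases hq : ∀ w' ∈ l, ∀ i, x.2 i ∈ KIdeal P L w'
      · rw [if_pos hq, dotted_Lbar_proj P L hL Lbar hLbar w (h w (List.mem_cons_self)) x]
        by_cases hw : ∀ i, x.2 i ∈ KIdeal P L w
        · rw [if_pos hw, if_pos (by
            intro w' hw'
            rcases List.mem_cons.mp hw' with rfl | hw'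
            · exact hw
            · exact hq w' hw')]
        · rw [if_neg hw, if_neg (fun hh => hw (hh w (List.mem_cons_self)))]
      · rw [if_neg hq, map_zero, if_neg (fun hh => hq fun w' hw' =>
          hh w' (List.mem_cons_of_mem w hw'))]


/-- **(Corollary 4.8.)**  If the canonical map from the unit fiber of `C*_s(P) ≅ 𝒯̄(P)`
onto the unit fiber of `𝒯_λ(P)` is injective — i.e., linear combinations of neutral
monomials have the same norm for `L̄` and for `L` — then `P` satisfies independence. -/
theorem injective_fiber_map_implies_independence (P : Submonoid G)
    (L : P → (l2 P →L[ℂ] l2 P))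
    (hL : ∀ p q : P, L p (ket q) = ket (p * q))
    (Lbar : P → (l2 (PTuples P) →L[ℂ] l2 (PTuples P)))
    (hLbar : ∀ (p : P) (x : PTuples P), Lbar p (ket x) = ket (pMul P p x))
    (hinj : ∀ (m : ℕ) (a : Fin m → Word P) (lam : Fin m → ℂ),
      (∀ i, IsNeutral P (a i)) →
      ‖∑ i, lam i • dotted P L (a i)‖ = ‖∑ i, lam i • dotted P Lbar (a i)‖) :
    ∀ (a : Word P) (n : ℕ) (b : Fin n → Word P), 1 ≤ n →
      KIdeal P L a = ⋃ i, KIdeal P L (b i) →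
      ∃ i, KIdeal P L a = KIdeal P L (b i) := by
  intro a n b hn hcover
  by_contra hcon
  push_neg at hcon
  classical
  have hsub : ∀ i, KIdeal P L (b i) ⊆ KIdeal P L a := by
    intro i
    rw [hcover]
    exact Set.subset_iUnion (fun i => KIdeal P L (b i)) i
  rcases Set.eq_empty_or_nonempty (KIdeal P L a) with hemp | ⟨p₀, hp₀⟩
  · refine hcon ⟨0, hn⟩ ?_
    have h1 := hsub ⟨0, hn⟩
    rw [hemp] at h1 ⊢
    exact (Set.subset_empty_iff.mp h1).symm
  have ha : IsNeutral P a := ((mem_KIdeal_iff P L hL a p₀).mp hp₀).2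
  have hcov' : ∀ p, p ∈ KIdeal P L a → ∃ i : {i : Fin n // IsNeutral P (b i)},
      p ∈ KIdeal P L (b i.1) := by
    intro p hp
    rw [hcover] at hp
    rcases Set.mem_iUnion.mp hp with ⟨i, hi⟩
    exact ⟨⟨i, ((mem_KIdeal_iff P L hL (b i) p).mp hi).2⟩, hi⟩
  set ι := {i : Fin n // IsNeutral P (b i)} with hι
  haveI : Nonempty ι := ⟨(hcov' p₀ hp₀).choose⟩
  have hstrict : ∀ i : ι, ∃ p, p ∈ KIdeal P L a ∧ p ∉ KIdeal P L (b i.1) := by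
    intro i
    by_contra hno
    push_neg at hno
    exact hcon i.1 (Set.Subset.antisymm (fun p hp => hno p hp) (hsub i.1))
  choose c hc1 hc2 using hstrict
  set m := Fintype.card ι with hmdef
  have hm1 : 1 ≤ m := Fintype.card_pos
  set eι : Fin m ≃ ι := (Fintype.equivFin ι).symm with heι
  have hmm : m - 1 + 1 = m := Nat.succ_pred_eq_of_pos hm1
  set x₀ : PTuples P := ⟨m - 1, fun j => c (eι (Fin.cast hmm j))⟩ with hx₀
  set N := Fintype.card (Finset ι) with hN
  set eF : Fin N ≃ Finset ι := (Fintype.equivFin (Finset ι)).symm with heF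
  set W : Finset ι → Word P := fun S => a ++ catWords P (S.toList.map (fun i => b i.1))
    with hW
  have hmemmap : ∀ S : Finset ι, ∀ w ∈ S.toList.map (fun i => b i.1), IsNeutral P w := by
    intro S w hw
    rcases List.mem_map.mp hw with ⟨i, _, rfl⟩
    exact i.2
  have hWn : ∀ S : Finset ι, IsNeutral P (W S) := by
    intro S
    show wordElem P (W S) = 1
    rw [hW]
    simp only []
    rw [wordElem_append, show wordElem P a = 1 from ha,
      show wordElem P (catWords P (S.toList.map (fun i => b i.1))) = 1 from
        catWords_neutral P _ (hmemmap S), one_mul]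
  have keyL : ∀ (S : Finset ι) (p : P), dotted P L (W S) (ket p) =
      if (p ∈ KIdeal P L a ∧ ∀ i ∈ S, p ∈ KIdeal P L (b i.1)) then ket p else 0 := by
    intro S p
    rw [hW]
    simp only []
    rw [dotted_append, ContinuousLinearMap.mul_apply,
      dotted_L_cat P L hL _ (hmemmap S) p]
    by_cases h2 : ∀ w ∈ S.toList.map (fun i => b i.1), p ∈ KIdeal P L w
    · rw [if_pos h2, dotted_L_proj P L hL a ha p]
      by_cases h3 : p ∈ KIdeal P L a
      · rw [if_pos h3, if_pos ⟨h3, fun i hi =>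
          h2 (b i.1) (List.mem_map.mpr ⟨i, Finset.mem_toList.mpr hi, rfl⟩)⟩]
      · rw [if_neg h3, if_neg (fun hh => h3 hh.1)]
    · rw [if_neg h2, map_zero, if_neg (fun hh => h2 fun w hw => by
        rcases List.mem_map.mp hw with ⟨i, hi, rfl⟩
        exact hh.2 i (Finset.mem_toList.mp hi))]
  have keyLbar : ∀ (S : Finset ι) (x : PTuples P), dotted P Lbar (W S) (ket x) =
      if ((∀ t, x.2 t ∈ KIdeal P L a) ∧ ∀ i ∈ S, ∀ t, x.2 t ∈ KIdeal P L (b i.1))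
        then ket x else 0 := by
    intro S x
    rw [hW]
    simp only []
    rw [dotted_append, ContinuousLinearMap.mul_apply,
      dotted_Lbar_cat P L hL Lbar hLbar _ (hmemmap S) x]
    by_cases h2 : ∀ w ∈ S.toList.map (fun i => b i.1), ∀ t, x.2 t ∈ KIdeal P L w
    · rw [if_pos h2, dotted_Lbar_proj P L hL Lbar hLbar a ha x]
      by_cases h3 : ∀ t, x.2 t ∈ KIdeal P L a
      · rw [if_pos h3, if_pos ⟨h3, fun i hi =>
          h2 (b i.1) (List.mem_map.mpr ⟨i, Finset.mem_toList.mpr hi, rfl⟩)⟩]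
      · rw [if_neg h3, if_neg (fun hh => h3 hh.1)]
    · rw [if_neg h2, map_zero, if_neg (fun hh => h2 fun w hw => by
        rcases List.mem_map.mp hw with ⟨i, hi, rfl⟩
        exact hh.2 i (Finset.mem_toList.mp hi))]
  have hA0 : (∑ j : Fin N, ((-1 : ℂ) ^ (eF j).card) • dotted P L (W (eF j))) = 0 := by
    refine opExt _ _ fun p => ?_
    rw [ContinuousLinearMap.zero_apply, ContinuousLinearMap.sum_apply]
    simp only [ContinuousLinearMap.smul_apply]
    rw [Finset.sum_congr rfl (fun j _ => by rw [keyL (eF j) p])]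
    refine (Fintype.sum_equiv eF _
      (fun S : Finset ι => ((-1 : ℂ) ^ S.card) •
        (if (p ∈ KIdeal P L a ∧ ∀ i ∈ S, p ∈ KIdeal P L (b i.1)) then ket p else 0))
      (fun j => rfl)).trans ?_
    by_cases hp : p ∈ KIdeal P L a
    · set T : Finset ι := Finset.univ.filter (fun i => p ∈ KIdeal P L (b i.1)) with hT
      have hcondiff : ∀ S : Finset ι,
          (p ∈ KIdeal P L a ∧ ∀ i ∈ S, p ∈ KIdeal P L (b i.1)) ↔ S ⊆ T := by
        intro S
        constructor
        · exact fun h i hi => Finset.mem_filter.mpr ⟨Finset.mem_univ i, h.2 i hi⟩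
        · exact fun h => ⟨hp, fun i hi => (Finset.mem_filter.mp (h hi)).2⟩
      have hTne : T.Nonempty := by
        rcases hcov' p hp with ⟨i, hi⟩
        exact ⟨i, Finset.mem_filter.mpr ⟨Finset.mem_univ i, hi⟩⟩
      calc ∑ S : Finset ι, ((-1 : ℂ) ^ S.card) •
            (if (p ∈ KIdeal P L a ∧ ∀ i ∈ S, p ∈ KIdeal P L (b i.1)) then ket p else 0)
          = ∑ S : Finset ι, (if S ⊆ T then ((-1 : ℂ) ^ S.card) • ket p else 0) := by
            refine Finset.sum_congr rfl fun S _ => ?_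
            by_cases hS : S ⊆ T
            · rw [if_pos ((hcondiff S).mpr hS), if_pos hS]
            · rw [if_neg (fun hh => hS ((hcondiff S).mp hh)), if_neg hS, smul_zero]
        _ = ∑ S ∈ Finset.univ.filter (· ⊆ T), ((-1 : ℂ) ^ S.card) • ket p :=
            (Finset.sum_filter _ _).symm
        _ = ∑ S ∈ T.powerset, ((-1 : ℂ) ^ S.card) • ket p := by
            congr 1
            ext S
            simp [Finset.mem_powerset]
        _ = (∑ S ∈ T.powerset, ((-1 : ℂ) ^ S.card)) • ket p := by
            rw [Finset.sum_smul]
        _ = 0 := by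
            have hz : (∑ S ∈ T.powerset, ((-1 : ℤ) ^ S.card)) = 0 :=
              Finset.sum_powerset_neg_one_pow_card_of_nonempty hTne
            have hz' := congrArg (fun z : ℤ => (z : ℂ)) hz
            push_cast at hz'
            rw [hz', zero_smul]
    · refine Finset.sum_eq_zero fun S _ => ?_
      rw [if_neg (fun hh => hp hh.1), smul_zero]
  have hnorm := hinj N (fun j => W (eF j)) (fun j => (-1 : ℂ) ^ (eF j).card)
    (fun j => hWn (eF j))
  rw [hA0, norm_zero] at hnorm
  have hAbar : (∑ j : Fin N, ((-1 : ℂ) ^ (eF j).card) • dotted P Lbar (W (eF j))) = 0 :=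
    norm_eq_zero.mp hnorm.symm
  have hall : ∀ t, x₀.2 t ∈ KIdeal P L a := by
    intro t
    exact hc1 (eι (Fin.cast hmm t))
  have hx : (∑ j : Fin N, ((-1 : ℂ) ^ (eF j).card) • dotted P Lbar (W (eF j))) (ket x₀)
      = ket x₀ := by
    rw [ContinuousLinearMap.sum_apply]
    simp only [ContinuousLinearMap.smul_apply]
    rw [Finset.sum_congr rfl (fun j _ => by rw [keyLbar (eF j) x₀])]
    refine (Fintype.sum_equiv eF _
      (fun S : Finset ι => ((-1 : ℂ) ^ S.card) •
        (if ((∀ t, x₀.2 t ∈ KIdeal P L a) ∧ ∀ i ∈ S, ∀ t, x₀.2 t ∈ KIdeal P L (b i.1))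
          then ket x₀ else 0))
      (fun j => rfl)).trans ?_
    have hcondiff : ∀ S : Finset ι,
        ((∀ t, x₀.2 t ∈ KIdeal P L a) ∧ ∀ i ∈ S, ∀ t, x₀.2 t ∈ KIdeal P L (b i.1)) ↔
          S = ∅ := by
      intro S
      constructor
      · rintro ⟨-, h2⟩
        by_contra hS
        rcases Finset.nonempty_iff_ne_empty.mpr hS with ⟨i, hi⟩
        have hx0 : x₀.2 (Fin.cast hmm.symm (eι.symm i)) = c i := by
          show c (eι (Fin.cast hmm (Fin.cast hmm.symm (eι.symm i)))) = c i
          rw [show Fin.cast hmm (Fin.cast hmm.symm (eι.symm i)) = eι.symm i from Fin.ext rfl,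
            Equiv.apply_symm_apply]
        exact hc2 i (hx0 ▸ h2 i hi _)
      · rintro rfl
        exact ⟨hall, fun i hi => absurd hi (Finset.notMem_empty i)⟩
    calc ∑ S : Finset ι, ((-1 : ℂ) ^ S.card) •
          (if ((∀ t, x₀.2 t ∈ KIdeal P L a) ∧ ∀ i ∈ S, ∀ t, x₀.2 t ∈ KIdeal P L (b i.1))
            then ket x₀ else 0)
        = ∑ S : Finset ι, (if S = ∅ then ((-1 : ℂ) ^ S.card) • ket x₀ else 0) := by
          refine Finset.sum_congr rfl fun S _ => ?_
          by_cases hS : S = ∅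
          · rw [if_pos ((hcondiff S).mpr hS), if_pos hS]
          · rw [if_neg (fun hh => hS ((hcondiff S).mp hh)), if_neg hS, smul_zero]
      _ = ket x₀ := by
          rw [Finset.sum_ite_eq' Finset.univ (∅ : Finset ι)
            (fun S => ((-1 : ℂ) ^ S.card) • ket x₀)]
          simp
  rw [hAbar, ContinuousLinearMap.zero_apply] at hx
  exact ket_ne_zero x₀ hx.symm


end
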